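/- Let q ≥ 2 and let K be a real q × q matrix (with rows and columns indexed by 0, …, q−1). Suppose that for every sequence z : ℤ → ℝ, every i ∈ ℤ, and every j ∈ {1, …, q−1}, the overlapping-window consistency relation ∑_{k=0}^{q−1} K_{j,k} · z_{i+k} = ∑_{k=0}^{q−1} K_{j−1,k} · z_{i+1+k} holds (i.e., component j of K applied to the window (z_i, …, z_{i+q−1}) agrees with component j−1 of K applied to the shifted window (z_{i+1}, …, z_{i+q})). Then K is a scalar multiple of the identity matrix; in particular, K_{i,j} = 0 whenever i ≠ j, so the prediction of any component z_i cannot depend on any other component z_j. -/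
import Mathlib

private lemma dsum_in {q : ℕ} (f : Fin q → ℝ) (a m : ℤ) (t : ℕ) (ht : t < q)
    (hm : m = a + (t : ℤ)) :
    (∑ k : Fin q, f k * (if a + (k : ℤ) = m then 1 else 0)) = f ⟨t, ht⟩ := by
  subst hm
  rw [Finset.sum_eq_single (⟨t, ht⟩ : Fin q)]
  · simp
  · intro b _ hb
    have : (b : ℤ) ≠ (t : ℤ) := by
      simp only [Ne, Int.natCast_inj]
      exact fun h => hb (Fin.ext h)
    simp [this]
  · simp

private lemma dsum_out {q : ℕ} (f : Fin q → ℝ) (a m : ℤ)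
    (h : ∀ k : Fin q, a + (k : ℤ) ≠ m) :
    (∑ k : Fin q, f k * (if a + (k : ℤ) = m then 1 else 0)) = 0 := by
  simp [h]

/-- If the same `q × q` matrix `K` (with `q ≥ 2`) is an exact one-step predictor for all
overlapping length-`q` windows of every sequence `z : ℤ → ℝ` — i.e. component `j` of `K`
applied to the window starting at `i` agrees with component `j−1` of `K` applied to the
window starting at `i+1` — then `K` is a scalar multiple of the identity matrix; in
particular all off-diagonal entries vanish. -/
theorem overlapping_window_consistency_forces_diagonal
    (q : ℕ) (hq : 2 ≤ q) (K : Matrix (Fin q) (Fin q) ℝ)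
    (hcons : ∀ (z : ℤ → ℝ) (i : ℤ) (j : ℕ) (hj1 : 1 ≤ j) (hjq : j < q),
      (∑ k : Fin q, K ⟨j, hjq⟩ k * z (i + (k : ℤ))) =
        ∑ k : Fin q, K ⟨j - 1, by omega⟩ k * z (i + 1 + (k : ℤ))) :
    (∃ c : ℝ, K = c • (1 : Matrix (Fin q) (Fin q) ℝ)) ∧
      ∀ i j : Fin q, i ≠ j → K i j = 0 := by
  have : NeZero q := ⟨by omega⟩
  -- shift relation
  have shift : ∀ (j t : ℕ) (hj : j + 1 < q) (ht : t + 1 < q),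
      K ⟨j + 1, hj⟩ ⟨t + 1, ht⟩ = K ⟨j, by omega⟩ ⟨t, by omega⟩ := by
    intro j t hj ht
    have h := hcons (fun x => if x = ((t : ℤ) + 1) then 1 else 0) 0 (j + 1) (by omega) hj
    simp only [Nat.add_sub_cancel] at h
    rw [dsum_in _ 0 ((t : ℤ) + 1) (t + 1) ht (by push_cast; ring),
        dsum_in _ (0 + 1) ((t : ℤ) + 1) t (by omega) (by push_cast; ring)] at h
    exact h
  -- first column zero for rows ≥ 1
  have col0 : ∀ (j : ℕ) (hj1 : 1 ≤ j) (hj : j < q), K ⟨j, hj⟩ ⟨0, by omega⟩ = 0 := by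
    intro j hj1 hj
    have h := hcons (fun x => if x = (0 : ℤ) then 1 else 0) 0 j hj1 hj
    rw [dsum_in _ 0 (0 : ℤ) 0 (by omega) (by simp),
        dsum_out _ (0 + 1) 0 (fun k => by have := k.2; omega)] at h
    exact h
  -- last column zero for rows ≤ q - 2
  have colq : ∀ (j : ℕ) (hj : j + 1 < q), K ⟨j, by omega⟩ ⟨q - 1, by omega⟩ = 0 := by
    intro j hj
    have h := hcons (fun x => if x = (q : ℤ) then 1 else 0) 0 (j + 1) (by omega) hj
    simp only [Nat.add_sub_cancel] at h
    rw [dsum_out _ 0 (q : ℤ) (fun k => by have := k.2; omega),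
        dsum_in _ (0 + 1) (q : ℤ) (q - 1) (by omega)
          (by omega)] at h
    exact h.symm
  -- iterated shift
  have shiftd : ∀ (d a b : ℕ) (ha : a + d < q) (hb : b + d < q),
      K ⟨a + d, ha⟩ ⟨b + d, hb⟩ = K ⟨a, by omega⟩ ⟨b, by omega⟩ := by
    intro d
    induction d with
    | zero => intro a b ha hb; rfl
    | succ n ih =>
      intro a b ha hb
      calc K ⟨a + (n + 1), ha⟩ ⟨b + (n + 1), hb⟩
          = K ⟨(a + n) + 1, by omega⟩ ⟨(b + n) + 1, by omega⟩ := by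
            congr 1 <;> exact Fin.ext (by simp; omega)
        _ = K ⟨a + n, by omega⟩ ⟨b + n, by omega⟩ := shift (a + n) (b + n) (by omega) (by omega)
        _ = K ⟨a, by omega⟩ ⟨b, by omega⟩ := ih a b (by omega) (by omega)
  -- off-diagonal zero
  have offdiag : ∀ i j : Fin q, i ≠ j → K i j = 0 := by
    intro i j hij
    rcases lt_or_gt_of_ne (fun h : (i : ℕ) = (j : ℕ) => hij (Fin.ext h)) with h | h
    · -- i < j : shift up to last column
      have hj2 := j.2
      have key : K ⟨(i : ℕ) + (q - 1 - (j : ℕ)), by omega⟩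
          ⟨(j : ℕ) + (q - 1 - (j : ℕ)), by omega⟩ = K ⟨i, i.2⟩ ⟨j, j.2⟩ :=
        shiftd (q - 1 - (j : ℕ)) i j (by omega) (by omega)
      have e : (⟨(j : ℕ) + (q - 1 - (j : ℕ)), by omega⟩ : Fin q) = ⟨q - 1, by omega⟩ :=
        Fin.ext (by simp; omega)
      have z : K ⟨(i : ℕ) + (q - 1 - (j : ℕ)), by omega⟩
          ⟨(j : ℕ) + (q - 1 - (j : ℕ)), by omega⟩ = 0 := by
        rw [e]; exact colq _ (by omega)
      have : K ⟨i, i.2⟩ ⟨j, j.2⟩ = 0 := by rw [← key, z]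
      simpa using this
    · -- i > j : shift down to first column
      have hi2 := i.2
      have key : K ⟨((i : ℕ) - (j : ℕ)) + (j : ℕ), by omega⟩
          ⟨0 + (j : ℕ), by omega⟩ = K ⟨(i : ℕ) - (j : ℕ), by omega⟩ ⟨0, by omega⟩ :=
        shiftd (j : ℕ) _ 0 (by omega) (by omega)
      have z : K ⟨(i : ℕ) - (j : ℕ), by omega⟩ ⟨0, by omega⟩ = 0 :=
        col0 _ (by omega) _
      have e1 : (⟨((i : ℕ) - (j : ℕ)) + (j : ℕ), by omega⟩ : Fin q) = ⟨i, i.2⟩ :=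
        Fin.ext (by simp; omega)
      have e2 : (⟨0 + (j : ℕ), by omega⟩ : Fin q) = ⟨j, j.2⟩ := Fin.ext (by simp)
      have : K ⟨i, i.2⟩ ⟨j, j.2⟩ = 0 := by rw [← e1, ← e2, key, z]
      simpa using this
  refine ⟨⟨K 0 0, ?_⟩, offdiag⟩
  ext i j
  by_cases h : i = j
  · subst h
    have hi2 := i.2
    have diag : K ⟨0 + (i : ℕ), by omega⟩ ⟨0 + (i : ℕ), by omega⟩
        = K ⟨0, by omega⟩ ⟨0, by omega⟩ := shiftd (i : ℕ) 0 0 (by omega) (by omega)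
    have e : (⟨0 + (i : ℕ), by omega⟩ : Fin q) = i := Fin.ext (by simp)
    have e0 : (⟨0, by omega⟩ : Fin q) = 0 := Fin.ext (by simp)
    rw [e, e0] at diag
    simp only [Matrix.smul_apply, Matrix.one_apply_eq, smul_eq_mul, mul_one]
    exact diag
  · rw [offdiag i j h]
    simp [Matrix.one_apply_ne h]
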